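/- arXiv:cs/0506008 — 5 statements merged into one kernel-verified Lean document; each statement's English description precedes it below -/
import Mathlib

section
/- Let ρ ≥ 2, let t be a homogeneous term in r variables, and let η be its infinite-state transition function with extension η̂ to words. For all p, q ∈ ℤ: there exist N, a_1, …, a_r ∈ ℕ such that N ≥ ⌈log_ρ(1 + max{a_1,…,a_r})⌉ and ρ^N·p + t[a_1,…,a_r] = q, if and only if there exists a word w ∈ (Σ^r)^* such that η̂(p, w) = q. -/
namespace Presburger

/-- A letter of the alphabet `Σ^r`, where `Σ = {0, …, ρ-1}`. -/
abbrev Letter (ρ r : ℕ) := Fin r → Fin ρ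

/-- The natural number encoded by a word over `Σ` (most significant digit first). -/
def natVal (ρ : ℕ) (w : List ℕ) : ℕ := w.foldl (fun acc b => ρ * acc + b) 0

/-- The integer encoded by a nonempty word over `Σ` (ρ's complement,
most significant digit first); the empty word gets the junk value `0`. -/
def intVal (ρ : ℕ) : List ℕ → ℤ
  | [] => 0
  | b :: u => (natVal ρ u : ℤ) - (if b = 0 then 0 else (ρ : ℤ) ^ u.length)

/-- The tuple of natural numbers encoded track-wise by a word over `Σ^r` (as integers). -/
def natVec (ρ r : ℕ) (w : List (Letter ρ r)) : Fin r → ℤ :=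
  fun i => (natVal ρ (w.map fun b => (b i : ℕ)) : ℤ)

/-- The tuple of integers encoded track-wise by a nonempty word over `Σ^r`. -/
def intVec (ρ r : ℕ) (w : List (Letter ρ r)) : Fin r → ℤ :=
  fun i => intVal ρ (w.map fun b => (b i : ℕ))

/-- A language over `Σ^r` represents a set `U ⊆ ℤ^r` if it consists exactly of the
nonempty words encoding a member of `U`. -/
def Represents (ρ r : ℕ) (L : Language (Letter ρ r)) (U : Set (Fin r → ℤ)) : Prop :=
  ∀ w : List (Letter ρ r), w ∈ L ↔ (w ≠ [] ∧ intVec ρ r w ∈ U)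

/-- A DFA represents `U ⊆ ℤ^r` if its accepted language does. -/
def DFARepresents (ρ r : ℕ) {σ : Type*} (M : DFA (Letter ρ r) σ) (U : Set (Fin r → ℤ)) : Prop :=
  Represents ρ r M.accepts U

/-- Value of the homogeneous term with coefficients `k` at the point `a`. -/
def tval {r : ℕ} (k : Fin r → ℤ) (a : Fin r → ℤ) : ℤ := ∑ i, k i * a i

/-- A homogeneous term is `0` or has all its coefficients nonzero. -/
def Homog {r : ℕ} (k : Fin r → ℤ) : Prop := k = 0 ∨ ∀ i, k i ≠ 0

/-- `σ(b)`: componentwise `0` if the digit is `0` and `-1` otherwise. -/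
def sgnLetter {ρ r : ℕ} (b : Letter ρ r) : Fin r → ℤ :=
  fun i => if (b i : ℕ) = 0 then 0 else -1

/-- The letter `b` viewed as a tuple of integers. -/
def letterInt {ρ r : ℕ} (b : Letter ρ r) : Fin r → ℤ := fun i => ((b i : ℕ) : ℤ)

/-- `‖t‖⁺`: the sum of the positive coefficients of `t`. -/
def posNorm {r : ℕ} (k : Fin r → ℤ) : ℤ := ∑ i, max (k i) 0

/-- `‖t‖⁻`: the sum of the absolute values of the negative coefficients of `t`. -/
def negNorm {r : ℕ} (k : Fin r → ℤ) : ℤ := ∑ i, max (-k i) 0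

/-- `gcd(t)`: the gcd of the absolute values of the coefficients of `t`. -/
def gcdT {r : ℕ} (k : Fin r → ℤ) : ℕ := Finset.univ.gcd fun i => (k i).natAbs

/-- The transition function `η` of the infinite-state automaton for `t`,
restricted to the integer states: `η(q, b) = ρ·q + t[b]`. -/
def etaStep (ρ : ℕ) {r : ℕ} (k : Fin r → ℤ) (q : ℤ) (b : Letter ρ r) : ℤ :=
  ρ * q + tval k (letterInt b)

/-- The transition of `η` out of the initial state: `η(q_I, b) = t[σ(b)]`. -/
def etaInit (ρ : ℕ) {r : ℕ} (k : Fin r → ℤ) (b : Letter ρ r) : ℤ :=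
  tval k (sgnLetter b)

/-- A state `q` is small (for `t ⋈ c`) if `q < min{c, -‖t‖⁺}`. -/
def IsSmall {r : ℕ} (k : Fin r → ℤ) (c q : ℤ) : Prop := q < min c (-posNorm k)

/-- A state `q` is large (for `t ⋈ c`) if `q > max{c, ‖t‖⁻}`. -/
def IsLarge {r : ℕ} (k : Fin r → ℤ) (c q : ℤ) : Prop := max c (negNorm k) < q

/-- The six relations `=, ≠, <, ≤, >, ≥` on `ℤ`. -/
def rel6 : Set (ℤ → ℤ → Prop) :=
  {fun x y => x = y, fun x y => x ≠ y, fun x y => x < y,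
   fun x y => x ≤ y, fun x y => x > y, fun x y => x ≥ y}

/-- Clamp an integer into the state set `{m, …, n}`; yields `none` (the initial state)
only in the degenerate case `m > n`, which never occurs for small `m` and large `n`. -/
noncomputable def clampSt (m n x : ℤ) : Option ↥(Finset.Icc m n) :=
  if h : max m (min n x) ∈ Finset.Icc m n then some ⟨max m (min n x), h⟩ else none

/-- The DFA `A^{t ⋈ c}_{(m,n)}` for the (in)equation `t ⋈ c`: states are
`q_I = none` together with `{m, …, n}`, transitions clamp `η` to `[m, n]`, and the
accepting states are the integer states `q` with `q ⋈ c`. -/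
noncomputable def ineqDFA (ρ : ℕ) {r : ℕ} (k : Fin r → ℤ) (m n : ℤ) (rel : ℤ → ℤ → Prop) (c : ℤ) :
    DFA (Letter ρ r) (Option ↥(Finset.Icc m n)) where
  step q b :=
    match q with
    | none => clampSt m n (etaInit ρ k b)
    | some z => clampSt m n (etaStep ρ k z.val b)
  start := none
  accept := {q | ∃ z : ↥(Finset.Icc m n), q = some z ∧ rel z.val c}

/-- Two states of a DFA are equivalent if they accept exactly the same words. -/
def stEquiv {α : Type*} {σ : Type*} (M : DFA α σ) (p q : σ) : Prop :=
  ∀ w : List α, (M.evalFrom p w ∈ M.accept ↔ M.evalFrom q w ∈ M.accept)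

end Presburger

namespace Presburger

lemma natVal_foldl (ρ : ℕ) (u : List ℕ) (a : ℕ) :
    u.foldl (fun acc b => ρ * acc + b) a = ρ ^ u.length * a + natVal ρ u := by
  induction u generalizing a with
  | nil => simp [natVal]
  | cons d u ih =>
    simp only [List.foldl_cons, List.length_cons, natVal]
    rw [ih, ih]
    ring

lemma natVal_cons (ρ d : ℕ) (u : List ℕ) :
    natVal ρ (d :: u) = ρ ^ u.length * d + natVal ρ u := by
  rw [show natVal ρ (d :: u) = u.foldl (fun acc b => ρ * acc + b) (ρ * 0 + d) from rfl,
    natVal_foldl]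
  simp

lemma natVal_append_singleton (ρ d : ℕ) (u : List ℕ) :
    natVal ρ (u ++ [d]) = ρ * natVal ρ u + d := by
  simp [natVal, List.foldl_append]

lemma natVal_lt (ρ : ℕ) (hρ : 0 < ρ) (u : List ℕ) (h : ∀ d ∈ u, d < ρ) :
    natVal ρ u < ρ ^ u.length := by
  induction u with
  | nil => simpa [natVal] using Nat.pos_pow_of_pos 0 hρ
  | cons d u ih =>
    rw [natVal_cons]
    have hd : d < ρ := h d (List.mem_cons_self)
    have hu : natVal ρ u < ρ ^ u.length := ih fun x hx => h x (List.mem_cons_of_mem _ hx)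
    calc ρ ^ u.length * d + natVal ρ u < ρ ^ u.length * (d + 1) := by
          rw [mul_add, mul_one]; omega
      _ ≤ ρ ^ u.length * ρ := Nat.mul_le_mul_left _ (by omega)
      _ = ρ ^ (d :: u).length := (pow_succ ρ u.length).symm

lemma tval_linear {r : ℕ} (k : Fin r → ℤ) (c : ℤ) (x y : Fin r → ℤ) :
    tval k (fun i => c * x i + y i) = c * tval k x + tval k y := by
  simp only [tval, Finset.mul_sum, ← Finset.sum_add_distrib]
  congr 1; funext i; ring

lemma eta_foldl (ρ : ℕ) {r : ℕ} (k : Fin r → ℤ) (w : List (Letter ρ r)) (p : ℤ) :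
    w.foldl (etaStep ρ k) p =
      (ρ : ℤ) ^ w.length * p +
        tval k (fun i => (natVal ρ (w.map fun b => (b i : ℕ)) : ℤ)) := by
  induction w generalizing p with
  | nil => simp [natVal, tval]
  | cons b w ih =>
    simp only [List.foldl_cons, List.length_cons, List.map_cons]
    rw [ih]
    have hnv : ∀ i : Fin r,
        ((natVal ρ ((b i : ℕ) :: w.map fun c => (c i : ℕ)) : ℕ) : ℤ)
          = (ρ : ℤ) ^ w.length * ((b i : ℕ) : ℤ)
            + ((natVal ρ (w.map fun c => (c i : ℕ)) : ℕ) : ℤ) := by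
      intro i
      rw [natVal_cons]
      push_cast [List.length_map]
      ring
    have : tval k (fun i => ((natVal ρ ((b i : ℕ) :: w.map fun c => (c i : ℕ)) : ℕ) : ℤ))
        = (ρ : ℤ) ^ w.length * tval k (fun i => ((b i : ℕ) : ℤ))
          + tval k (fun i => ((natVal ρ (w.map fun c => (c i : ℕ)) : ℕ) : ℤ)) := by
      rw [← tval_linear]
      congr 1; funext i; exact hnv i
    rw [this]
    have hL : tval k (letterInt b) = tval k fun i => ((b i : ℕ) : ℤ) := rfl
    simp only [etaStep]
    rw [hL]
    ring

/-- Word of `N` base-`ρ` digits encoding the tuple `a` track-wise. -/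
def digitsWord (ρ r : ℕ) (hρ : 0 < ρ) : ℕ → (Fin r → ℕ) → List (Letter ρ r)
  | 0, _ => []
  | N + 1, a =>
      digitsWord ρ r hρ N (fun i => a i / ρ) ++ [fun i => ⟨a i % ρ, Nat.mod_lt _ hρ⟩]

lemma digitsWord_length (ρ r : ℕ) (hρ : 0 < ρ) (N : ℕ) (a : Fin r → ℕ) :
    (digitsWord ρ r hρ N a).length = N := by
  induction N generalizing a with
  | zero => rfl
  | succ N ih => simp [digitsWord, ih]

lemma digitsWord_natVal (ρ r : ℕ) (hρ : 0 < ρ) (N : ℕ) (a : Fin r → ℕ)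
    (ha : ∀ i, a i < ρ ^ N) (i : Fin r) :
    natVal ρ ((digitsWord ρ r hρ N a).map fun b => (b i : ℕ)) = a i := by
  induction N generalizing a with
  | zero =>
    have : a i = 0 := by have := ha i; simpa using this
    simp [digitsWord, natVal, this]
  | succ N ih =>
    simp only [digitsWord, List.map_append, List.map_cons, List.map_nil]
    rw [natVal_append_singleton, ih]
    · exact Nat.div_add_mod _ _
    · intro j
      have := ha j
      rw [Nat.div_lt_iff_lt_mul hρ]
      calc a j < ρ ^ (N + 1) := this
        _ = ρ ^ N * ρ := pow_succ ρ N

/-- Lemma `reachability_question`.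
For integer states `p, q`: there are `N, a_1, …, a_r ∈ ℕ` with
`N ≥ ⌈log_ρ(1 + max{a_1,…,a_r})⌉` and `ρ^N·p + t[a] = q`, iff some word `w`
satisfies `η̂(p, w) = q`. -/
theorem stmt_1 (ρ r : ℕ) (hρ : 2 ≤ ρ) (k : Fin r → ℤ) (hk : Homog k) (p q : ℤ) :
    (∃ (N : ℕ) (a : Fin r → ℕ),
        Nat.clog ρ (1 + Finset.univ.sup a) ≤ N ∧
        (ρ : ℤ) ^ N * p + tval k (fun i => (a i : ℤ)) = q) ↔
    (∃ w : List (Letter ρ r), w.foldl (etaStep ρ k) p = q) := by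
  have hρ1 : 1 < ρ := hρ
  have hρ0 : 0 < ρ := by omega
  constructor
  · rintro ⟨N, a, hclog, heq⟩
    have hle : 1 + Finset.univ.sup a ≤ ρ ^ N := (Nat.clog_le_iff_le_pow hρ1).1 hclog
    have ha : ∀ i, a i < ρ ^ N := by
      intro i
      have : a i ≤ Finset.univ.sup a := Finset.le_sup (Finset.mem_univ i)
      omega
    refine ⟨digitsWord ρ r hρ0 N a, ?_⟩
    rw [eta_foldl, digitsWord_length]
    have : (fun i => ((natVal ρ ((digitsWord ρ r hρ0 N a).map fun b => (b i : ℕ)) : ℕ) : ℤ))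
        = fun i => ((a i : ℕ) : ℤ) := by
      funext i; rw [digitsWord_natVal ρ r hρ0 N a ha i]
    rw [this]; exact heq
  · rintro ⟨w, hw⟩
    refine ⟨w.length, fun i => natVal ρ (w.map fun b => (b i : ℕ)), ?_, ?_⟩
    · rw [Nat.clog_le_iff_le_pow hρ1]
      have hlt : ∀ i : Fin r, natVal ρ (w.map fun b => (b i : ℕ)) < ρ ^ w.length := by
        intro i
        have := natVal_lt ρ hρ0 (w.map fun b => (b i : ℕ)) (by
          intro d hd
          simp only [List.mem_map] at hd
          obtain ⟨b, _, rfl⟩ := hd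
          exact (b i).isLt)
        simpa [List.length_map] using this
      have hpos : 0 < ρ ^ w.length := Nat.pow_pos hρ0
      rcases isEmpty_or_nonempty (Fin r) with h | h
      · simp only [Finset.univ_eq_empty, Finset.sup_empty]; show 1 + 0 ≤ _; omega
      · have : Finset.univ.sup (fun i => natVal ρ (w.map fun b => (b i : ℕ))) < ρ ^ w.length := by
          refine (Finset.sup_lt_iff (show (⊥ : ℕ) < ρ ^ w.length from hpos)).2 ?_
          intro i _; exact hlt i
        exact Nat.one_add_le_iff.mpr this
    · rw [← hw, eta_foldl]

end Presburger
end

section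
/- Let t ⋈ c be a normalized (in)equation with ⋈ ∈ {=,≠,<,≤,>,≥}. If m is small and n is large, then the DFA A^{t⋈c}_{(m,n)} represents the set {a ∈ ℤ^r : t[a] ⋈ c}, and A^{t⋈c}_{(m,n)} has exactly 2 + n − m states. -/
namespace Presburger

section Aux

lemma natVal_append (ρ : ℕ) (u : List ℕ) (d : ℕ) :
    natVal ρ (u ++ [d]) = ρ * natVal ρ u + d := by
  simp [natVal, List.foldl_append]

lemma intVal_cons_append (ρ a d : ℕ) (u : List ℕ) :
    intVal ρ ((a :: u) ++ [d]) = ρ * intVal ρ (a :: u) + d := by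
  show intVal ρ (a :: (u ++ [d])) = _
  simp only [intVal, natVal_append, List.length_append, List.length_cons,
    List.length_nil]
  split <;> push_cast <;> ring

lemma intVec_singleton {ρ r : ℕ} (b : Letter ρ r) :
    intVec ρ r [b] = sgnLetter b := by
  funext i
  simp only [intVec, List.map_cons, List.map_nil, intVal, natVal, sgnLetter,
    List.foldl_nil, List.length_nil, pow_zero]
  split <;> simp

lemma intVec_append {ρ r : ℕ} (w : List (Letter ρ r)) (hw : w ≠ [])
    (b : Letter ρ r) (i : Fin r) :
    intVec ρ r (w ++ [b]) i = ρ * intVec ρ r w i + ((b i : ℕ) : ℤ) := by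
  obtain ⟨a, u, rfl⟩ := List.exists_cons_of_ne_nil hw
  simp only [intVec, List.map_append, List.map_cons, List.map_nil]
  exact intVal_cons_append ρ (a i) (b i) (u.map fun x => (x i : ℕ))

lemma tval_smul_add {r : ℕ} (k x y : Fin r → ℤ) (ρ : ℤ) :
    tval k (fun i => ρ * x i + y i) = ρ * tval k x + tval k y := by
  simp only [tval, Finset.mul_sum, ← Finset.sum_add_distrib]
  exact Finset.sum_congr rfl fun i _ => by ring

lemma tval_intVec_append {ρ r : ℕ} (k : Fin r → ℤ) (w : List (Letter ρ r))
    (hw : w ≠ []) (b : Letter ρ r) :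
    tval k (intVec ρ r (w ++ [b]))
      = ρ * tval k (intVec ρ r w) + tval k (letterInt b) := by
  have h : intVec ρ r (w ++ [b])
      = fun i => (ρ : ℤ) * intVec ρ r w i + letterInt b i := by
    funext i; exact intVec_append w hw b i
  rw [h, tval_smul_add]

lemma tval_neg {r : ℕ} (k x : Fin r → ℤ) : tval (-k) x = -tval k x := by
  simp [tval, Finset.sum_neg_distrib]

lemma posNorm_neg {r : ℕ} (k : Fin r → ℤ) : posNorm (-k) = negNorm k := by
  simp [posNorm, negNorm]

lemma tval_letter_le {ρ r : ℕ} (hρ : 2 ≤ ρ) (k : Fin r → ℤ) (b : Letter ρ r) :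
    tval k (letterInt b) ≤ ((ρ : ℤ) - 1) * posNorm k := by
  rw [posNorm, Finset.mul_sum, tval]
  apply Finset.sum_le_sum
  intro i _
  have h0 : (0:ℤ) ≤ ((b i : ℕ) : ℤ) := Int.natCast_nonneg _
  have h1 : ((b i : ℕ) : ℤ) ≤ (ρ : ℤ) - 1 := by
    have := (b i).is_lt; omega
  have hρ' : (2:ℤ) ≤ ρ := by exact_mod_cast hρ
  simp only [letterInt]
  rcases le_total (k i) 0 with h | h
  · have hmax : max (k i) 0 = 0 := max_eq_right h
    rw [hmax]
    nlinarith
  · have hmax : max (k i) 0 = k i := max_eq_left h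
    rw [hmax]
    nlinarith

lemma tval_letter_ge {ρ r : ℕ} (hρ : 2 ≤ ρ) (k : Fin r → ℤ) (b : Letter ρ r) :
    -(((ρ : ℤ) - 1) * negNorm k) ≤ tval k (letterInt b) := by
  have := tval_letter_le hρ (-k) b
  rw [tval_neg, posNorm_neg] at this
  linarith

lemma clampSt_eq {m n : ℤ} (hmn : m ≤ n) (x : ℤ) :
    clampSt m n x = some ⟨max m (min n x), by simp [Finset.mem_Icc]; omega⟩ := by
  rw [clampSt, dif_pos]

lemma clamp_eta {ρ m n v T : ℤ} (hρ : 2 ≤ ρ) (hmn : m ≤ n)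
    (hT1 : T ≤ (ρ - 1) * (-m - 1)) (hT2 : -((ρ - 1) * (n - 1)) ≤ T) :
    max m (min n (ρ * max m (min n v) + T)) = max m (min n (ρ * v + T)) := by
  rcases le_or_gt v m with h | h
  · have hc : max m (min n v) = m := by omega
    rw [hc]
    have h1 : ρ * v + T ≤ m := by nlinarith
    have h2 : ρ * m + T ≤ m := by nlinarith
    omega
  rcases le_or_gt n v with h' | h'
  · have hc : max m (min n v) = n := by omega
    rw [hc]
    have h1 : n ≤ ρ * v + T := by nlinarith
    have h2 : n ≤ ρ * n + T := by nlinarith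
    omega
  · have hc : max m (min n v) = v := by omega
    rw [hc]

lemma rel_congr {rel : ℤ → ℤ → Prop} (hrel : rel ∈ rel6) {x y c : ℤ}
    (h : x = y ∨ (x < c ∧ y < c) ∨ (c < x ∧ c < y)) : rel x c ↔ rel y c := by
  simp only [rel6, Set.mem_insert_iff, Set.mem_singleton_iff] at hrel
  rcases hrel with rfl | rfl | rfl | rfl | rfl | rfl <;> beta_reduce <;> omega

lemma eval_eq {ρ r : ℕ} (hρ : 2 ≤ ρ) (k : Fin r → ℤ)
    (rel : ℤ → ℤ → Prop) (c m n : ℤ) (hmn : m ≤ n)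
    (hp : posNorm k ≤ -m - 1) (hq : negNorm k ≤ n - 1)
    (w : List (Letter ρ r)) (hw : w ≠ []) :
    (ineqDFA ρ k m n rel c).eval w = clampSt m n (tval k (intVec ρ r w)) := by
  have hρ' : (2:ℤ) ≤ ρ := by exact_mod_cast hρ
  induction w using List.reverseRecOn with
  | nil => exact absurd rfl hw
  | append_singleton w b ih =>
    rcases eq_or_ne w [] with rfl | hw'
    · show (ineqDFA ρ k m n rel c).eval ([] ++ [b]) = _
      rw [DFA.eval_append_singleton]
      show clampSt m n (etaInit ρ k b) = _
      simp only [List.nil_append]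
      rw [intVec_singleton, etaInit]
    · rw [DFA.eval_append_singleton, ih hw']
      rw [clampSt_eq hmn]
      show clampSt m n (etaStep ρ k _ b) = _
      rw [tval_intVec_append k w hw' b, etaStep, clampSt_eq hmn, clampSt_eq hmn]
      simp only [Option.some.injEq, Subtype.mk.injEq]
      have hT1 : tval k (letterInt b) ≤ ((ρ:ℤ) - 1) * (-m - 1) := by
        have h1 := tval_letter_le hρ k b
        nlinarith
      have hT2 : -(((ρ:ℤ) - 1) * (n - 1)) ≤ tval k (letterInt b) := by
        have h1 := tval_letter_ge hρ k b
        nlinarith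
      exact clamp_eta hρ' hmn hT1 hT2

end Aux

/-- Lemma `bound_automata_(in)equation`.
If `m` is small and `n` is large, the DFA `A^{t ⋈ c}_{(m,n)}` represents
`{a ∈ ℤ^r : t[a] ⋈ c}` and has exactly `2 + n - m` states. -/
theorem stmt_2 (ρ r : ℕ) (hρ : 2 ≤ ρ) (k : Fin r → ℤ) (hk : Homog k)
    (rel : ℤ → ℤ → Prop) (hrel : rel ∈ rel6) (c m n : ℤ)
    (hm : IsSmall k c m) (hn : IsLarge k c n) :
    DFARepresents ρ r (ineqDFA ρ k m n rel c) {a | rel (tval k a) c} ∧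
    (Fintype.card (Option ↥(Finset.Icc m n)) : ℤ) = 2 + n - m := by
  have hmc : m < c := by have := hm; unfold IsSmall at this; omega
  have hcn : c < n := by have := hn; unfold IsLarge at this; omega
  have hp : posNorm k ≤ -m - 1 := by have := hm; unfold IsSmall at this; omega
  have hq : negNorm k ≤ n - 1 := by have := hn; unfold IsLarge at this; omega
  have hmn : m ≤ n := by omega
  constructor
  · intro w
    rw [DFA.mem_accepts]
    rcases eq_or_ne w [] with rfl | hw
    · simp only [DFA.eval_nil]
      show (ineqDFA ρ k m n rel c).start ∈ _ ↔ _
      simp [ineqDFA]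
    · rw [eval_eq hρ k rel c m n hmn hp hq w hw, clampSt_eq hmn]
      have haccept : ∀ z : ↥(Finset.Icc m n),
          (some z ∈ (ineqDFA ρ k m n rel c).accept ↔ rel z.val c) := by
        intro z
        show (∃ z' : ↥(Finset.Icc m n), some z = some z' ∧ rel z'.val c) ↔ rel z.val c
        constructor
        · rintro ⟨z', hz, hr⟩
          cases Option.some.inj hz
          exact hr
        · intro hr
          exact ⟨z, rfl, hr⟩
      rw [haccept]
      set v := tval k (intVec ρ r w) with hv
      have key : rel (max m (min n v)) c ↔ rel v c := by
        apply rel_congr hrel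
        omega
      simp [key, hw, Set.mem_setOf_eq]
      exact Iff.rfl
  · rw [Fintype.card_option, Fintype.card_coe, Int.card_Icc]
    push_cast
    omega


end Presburger
end

section
/- Let t ⋈ c be a normalized (in)equation with ⋈ ∈ {=,≠,<,≤,>,≥} and gcd(t) = 1, let A^{t⋈c}_{(m,n)} be the DFA with m = max{q ∈ ℤ : q is small} and n = min{q ∈ ℤ : q is large}, and let S := {s ∈ ℤ : −||t||^+ < s < ||t||^−}. Then every state q ∈ {m,…,n} is reachable from every state p ∈ S. -/
namespace Presburger

section Aux

lemma posNorm_nonneg {r : ℕ} (k : Fin r → ℤ) : 0 ≤ posNorm k :=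
  Finset.sum_nonneg fun i _ => le_max_right _ _

lemma negNorm_nonneg {r : ℕ} (k : Fin r → ℤ) : 0 ≤ negNorm k :=
  Finset.sum_nonneg fun i _ => le_max_right _ _

lemma clampSt_eq_some {m n x : ℤ} (h1 : m ≤ x) (h2 : x ≤ n) :
    clampSt m n x = some ⟨x, Finset.mem_Icc.2 ⟨h1, h2⟩⟩ := by
  have hx : max m (min n x) = x := by rw [min_eq_right h2, max_eq_right h1]
  simp only [clampSt, hx]
  rw [dif_pos (Finset.mem_Icc.2 ⟨h1, h2⟩)]

lemma clampSt_eq_low {m n x : ℤ} (h1 : x ≤ m) (h2 : m ≤ n) :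
    clampSt m n x = some ⟨m, Finset.mem_Icc.2 ⟨le_refl m, h2⟩⟩ := by
  have hx : max m (min n x) = m := by
    rw [min_eq_right (le_trans h1 h2), max_eq_left h1]
  simp only [clampSt, hx]
  rw [dif_pos (Finset.mem_Icc.2 ⟨le_refl m, h2⟩)]

lemma clampSt_eq_high {m n x : ℤ} (h1 : n ≤ x) (h2 : m ≤ n) :
    clampSt m n x = some ⟨n, Finset.mem_Icc.2 ⟨h2, le_refl n⟩⟩ := by
  have hx : max m (min n x) = n := by rw [min_eq_left h1, max_eq_right h2]
  simp only [clampSt, hx]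
  rw [dif_pos (Finset.mem_Icc.2 ⟨h2, le_refl n⟩)]

lemma sum_mul_le_upper {r : ℕ} (k v : Fin r → ℤ) (W : ℤ) (hW : 0 ≤ W)
    (hv : ∀ i, 0 ≤ v i ∧ v i ≤ W) : (∑ i, k i * v i) ≤ posNorm k * W := by
  rw [posNorm, Finset.sum_mul]
  refine Finset.sum_le_sum fun i _ => ?_
  obtain ⟨h1, h2⟩ := hv i
  rcases le_total (k i) 0 with h | h
  · have : max (k i) 0 = 0 := max_eq_right h
    nlinarith
  · have : max (k i) 0 = k i := max_eq_left h
    nlinarith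

lemma sum_mul_le_lower {r : ℕ} (k v : Fin r → ℤ) (W : ℤ) (hW : 0 ≤ W)
    (hv : ∀ i, 0 ≤ v i ∧ v i ≤ W) : -(negNorm k * W) ≤ ∑ i, k i * v i := by
  rw [negNorm, Finset.sum_mul, ← Finset.sum_neg_distrib]
  refine Finset.sum_le_sum fun i _ => ?_
  obtain ⟨h1, h2⟩ := hv i
  rcases le_total (k i) 0 with h | h
  · have : max (-k i) 0 = -k i := max_eq_left (by linarith)
    nlinarith
  · have : max (-k i) 0 = 0 := max_eq_right (by linarith)
    nlinarith

lemma posAddNeg {r : ℕ} (k : Fin r → ℤ) : posNorm k + negNorm k = ∑ i, |k i| := by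
  rw [posNorm, negNorm, ← Finset.sum_add_distrib]
  refine Finset.sum_congr rfl fun i _ => ?_
  rcases le_total (k i) 0 with h | h
  · rw [max_eq_right h, max_eq_left (by linarith), abs_of_nonpos h]; ring
  · rw [max_eq_left h, max_eq_right (by linarith), abs_of_nonneg h]; ring

lemma gcdT_dvd {r : ℕ} (k : Fin r → ℤ) (i : Fin r) : gcdT k ∣ (k i).natAbs :=
  Finset.gcd_dvd (Finset.mem_univ i)

lemma dvd_gcdT {r : ℕ} (k : Fin r → ℤ) (d : ℕ) (h : ∀ i, d ∣ (k i).natAbs) : d ∣ gcdT k :=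
  Finset.dvd_gcd fun i _ => h i

/-- Representability of bounded multiples of the gcd. -/
def RepOK {r : ℕ} (k : Fin r → ℤ) : Prop :=
  ∀ V z : ℤ, 3 * (posNorm k + negNorm k) ^ 2 ≤ V → ((gcdT k : ℤ)) ∣ z →
    -negNorm k * V + (posNorm k + negNorm k) ^ 2 ≤ z →
    z ≤ posNorm k * V - (posNorm k + negNorm k) ^ 2 →
    ∃ v : Fin r → ℤ, (∀ i, 0 ≤ v i ∧ v i ≤ V) ∧ ∑ i, k i * v i = z

lemma step_pos (r : ℕ) (k : Fin (r + 1) → ℤ) (hki : ∀ i, k i ≠ 0) (h0 : 0 < k 0)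
    (htail : RepOK (fun i : Fin r => k i.succ)) : RepOK k := by
  intro V z hV hdvd hlo hhi
  set l : ℤ := k 0 with hl
  set k' : Fin r → ℤ := fun i => k i.succ with hk'
  set P' : ℤ := posNorm k' with hP'
  set N' : ℤ := negNorm k' with hN'
  have hP'0 : 0 ≤ P' := posNorm_nonneg k'
  have hN'0 : 0 ≤ N' := negNorm_nonneg k'
  have hP : posNorm k = l + P' := by
    rw [posNorm, Fin.sum_univ_succ, max_eq_left h0.le]; rfl
  have hN : negNorm k = N' := by
    rw [negNorm, Fin.sum_univ_succ, max_eq_right (by linarith : -k 0 ≤ 0), zero_add]; rfl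
  rw [hP, hN] at hlo hhi hV
  rcases Nat.eq_zero_or_pos r with hr | hr
  · -- r = 0 : single positive coefficient
    subst hr
    have hP'0' : P' = 0 := by simp [hP', posNorm]
    have hN'0' : N' = 0 := by simp [hN', negNorm]
    rw [hP'0', hN'0'] at hlo hhi
    have hgl : gcdT k = l.natAbs := by
      refine Nat.dvd_antisymm (gcdT_dvd k 0) (dvd_gcdT k _ fun i => ?_)
      have : i = 0 := Fin.ext (by omega)
      rw [this]
    have hlz : l ∣ z := by
      have : ((l.natAbs : ℤ)) ∣ z := by rw [← hgl]; exact hdvd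
      rwa [Int.natAbs_of_nonneg h0.le] at this
    obtain ⟨u, hu⟩ := hlz
    refine ⟨fun _ => u, fun i => ⟨?_, ?_⟩, ?_⟩
    · nlinarith
    · nlinarith
    · rw [Fin.sum_univ_one, ← hu]
  · -- r ≥ 1
    set G : ℕ := gcdT k' with hG
    have hG0 : 0 < G := by
      rcases Nat.eq_zero_or_pos G with h | h
      · exfalso
        have := (Finset.gcd_eq_zero_iff.mp h) ⟨0, hr⟩ (Finset.mem_univ _)
        exact hki (⟨0, hr⟩ : Fin r).succ (Int.natAbs_eq_zero.mp this)
      · exact h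
    have hK'1 : 1 ≤ P' + N' := by
      rw [hP', hN', posAddNeg]
      calc (1 : ℤ) ≤ |k' ⟨0, hr⟩| := Int.one_le_abs (hki (⟨0, hr⟩ : Fin r).succ)
        _ ≤ ∑ i, |k' i| :=
            Finset.single_le_sum (f := fun i => |k' i|) (fun i _ => abs_nonneg _)
              (Finset.mem_univ _)
    have hGK' : (G : ℤ) ≤ P' + N' := by
      have h1 : G ∣ (k' ⟨0, hr⟩).natAbs := gcdT_dvd k' ⟨0, hr⟩
      have h2 : G ≤ (k' ⟨0, hr⟩).natAbs :=
        Nat.le_of_dvd (Int.natAbs_pos.mpr (hki (⟨0, hr⟩ : Fin r).succ)) h1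
      calc (G : ℤ) ≤ ((k' ⟨0, hr⟩).natAbs : ℤ) := by exact_mod_cast h2
        _ = |k' ⟨0, hr⟩| := (Int.abs_eq_natAbs _).symm
        _ ≤ ∑ i, |k' i| :=
            Finset.single_le_sum (f := fun i => |k' i|) (fun i _ => abs_nonneg _)
              (Finset.mem_univ _)
        _ = P' + N' := by rw [hP', hN', posAddNeg]
    set g : ℕ := Nat.gcd l.natAbs G with hgdef
    have hg0 : 0 < g := Nat.gcd_pos_of_pos_left _ (Int.natAbs_pos.mpr (hki 0))
    have hgz : (g : ℤ) ∣ z := by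
      have h1 : g ∣ gcdT k := by
        refine dvd_gcdT k g fun i => ?_
        refine Fin.cases ?_ ?_ i
        · exact Nat.gcd_dvd_left _ _
        · intro j
          exact dvd_trans (Nat.gcd_dvd_right _ _) (gcdT_dvd k' j)
      exact dvd_trans (by exact_mod_cast h1) hdvd
    have hgl : (g : ℤ) ∣ l := by
      have : (g : ℤ) ∣ (l.natAbs : ℤ) := by exact_mod_cast Nat.gcd_dvd_left l.natAbs G
      rwa [Int.natAbs_of_nonneg h0.le] at this
    have hgG : (g : ℤ) ∣ (G : ℤ) := by exact_mod_cast Nat.gcd_dvd_right l.natAbs G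
    set G' : ℕ := G / g with hG'def
    have hgG' : (g : ℤ) * (G' : ℤ) = G := by
      exact_mod_cast Nat.mul_div_cancel' (Nat.gcd_dvd_right l.natAbs G)
    have hG'0 : (0 : ℤ) < G' := by
      rcases Nat.eq_zero_or_pos G' with h | h
      · exfalso; rw [h] at hgG'; simp at hgG'; omega
      · exact_mod_cast h
    have hG'G : (G' : ℤ) ≤ G := by exact_mod_cast Nat.div_le_self G g
    -- Bezout
    have hbez : (g : ℤ) = l * Int.gcdA l G + G * Int.gcdB l G := by
      have h1 : Int.gcd l (G : ℤ) = g := by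
        rw [Int.gcd]; simp [hgdef]
      have := Int.gcd_eq_gcd_ab l (G : ℤ)
      rw [h1] at this; exact this
    obtain ⟨z₁, hz₁⟩ := hgz
    set u₀ : ℤ := Int.gcdA l G * z₁ with hu₀def
    have hu₀ : z - l * u₀ = (G : ℤ) * (Int.gcdB l G * z₁) := by
      rw [hz₁, hu₀def]; linear_combination z₁ * hbez
    set lb : ℤ := z - P' * V + (P' + N') ^ 2 with hlbdef
    set d : ℤ := (lb + l - 1) / l with hddef
    set L0 : ℤ := max 0 d with hL0def
    have hl1 : (1 : ℤ) ≤ l := h0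
    have hld : lb ≤ l * d := by
      have h1 := Int.mul_ediv_add_emod (lb + l - 1) l
      rw [← hddef] at h1
      have h2 : 0 ≤ (lb + l - 1) % l := Int.emod_nonneg _ (by omega)
      have h3 : (lb + l - 1) % l < l := Int.emod_lt_of_pos _ h0
      linarith
    have hlbL0 : lb ≤ l * L0 := by
      have : l * d ≤ l * L0 := by
        apply mul_le_mul_of_nonneg_left (le_max_right 0 d) h0.le
      linarith
    have hL0ub : l * L0 ≤ max 0 lb + l - 1 := by
      have h1 := Int.mul_ediv_add_emod (lb + l - 1) l
      rw [← hddef] at h1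
      have h2 : 0 ≤ (lb + l - 1) % l := Int.emod_nonneg _ (by omega)
      have hdub : l * d ≤ lb + l - 1 := by linarith
      rcases le_total d 0 with h | h
      · have : L0 = 0 := max_eq_left h
        rw [this]
        have := le_max_left (0:ℤ) lb
        linarith
      · have : L0 = d := max_eq_right h
        rw [this]
        have := le_max_right (0:ℤ) lb
        linarith
    have hL00 : 0 ≤ L0 := le_max_left 0 d
    set u : ℤ := L0 + (u₀ - L0) % (G' : ℤ) with hudef
    have he1 : 0 ≤ (u₀ - L0) % (G' : ℤ) := Int.emod_nonneg _ (by omega)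
    have he2 : (u₀ - L0) % (G' : ℤ) < G' := Int.emod_lt_of_pos _ hG'0
    have huL0 : L0 ≤ u := by omega
    have huub : u ≤ L0 + G' - 1 := by omega
    -- divisibility of z - l * u by G
    have hdvdu : (G : ℤ) ∣ z - l * u := by
      set t : ℤ := (u₀ - L0) / (G' : ℤ) with htdef
      have hueq : u₀ - u = (G' : ℤ) * t := by
        have h5 := Int.mul_ediv_add_emod (u₀ - L0) (G' : ℤ)
        rw [← htdef] at h5
        rw [hudef]
        linarith
      obtain ⟨l₁, hl₁⟩ := hgl
      refine ⟨Int.gcdB l G * z₁ + l₁ * t, ?_⟩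
      linear_combination hu₀ + l * hueq + (l₁ * t) * hgG' + ((G' : ℤ) * t) * hl₁
    -- key bounds
    have hG'K : (G' : ℤ) ≤ P' + N' := le_trans hG'G hGK'
    have hll : (0:ℤ) ≤ l * l := mul_nonneg h0.le h0.le
    have hlP' : (0:ℤ) ≤ l * P' := mul_nonneg h0.le hP'0
    have hlN' : (0:ℤ) ≤ l * N' := mul_nonneg h0.le hN'0
    have hV' : 3 * (P' + N') ^ 2 ≤ V := by
      linarith only [hV, hll, hlP', hlN']
    have hVK : P' + N' ≤ V := by
      have h1 : (P' + N') * 1 ≤ (P' + N') * (P' + N') :=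
        mul_le_mul_of_nonneg_left hK'1 (by linarith only [hK'1])
      linarith only [h1, hV', hK'1]
    have hVbig : 2 * (P' + N') + l ≤ V := by
      have hx1 : (1:ℤ) ≤ l + P' + N' := by linarith only [hl1, hP'0, hN'0]
      have hx2 : (l + P' + N') * 1 ≤ (l + P' + N') * (l + P' + N') :=
        mul_le_mul_of_nonneg_left hx1 (by linarith only [hx1])
      linarith only [hV, hx2, hl1, hP'0, hN'0]
    have hlG' : l * (G' : ℤ) ≤ l * (P' + N') := mul_le_mul_of_nonneg_left hG'K h0.le
    have hband : l * u ≤ max 0 lb + l * (G' : ℤ) - 1 := by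
      have h2 : l * u ≤ l * (L0 + (G' : ℤ) - 1) :=
        mul_le_mul_of_nonneg_left (by linarith only [huub]) h0.le
      have h3 : l * (L0 + (G' : ℤ) - 1) = l * L0 + l * (G' : ℤ) - l := by ring
      linarith only [h2, h3, hL0ub]
    have hub : l * u ≤ z + N' * V - (P' + N') ^ 2 := by
      rcases le_total lb 0 with h | h
      · rw [max_eq_left h] at hband
        linarith only [hband, hlG', hlo, hll, hlP', hlN']
      · rw [max_eq_right h] at hband
        rw [hlbdef] at hband
        have h3 : (P' + N') * (2 * (P' + N') + l) ≤ (P' + N') * V :=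
          mul_le_mul_of_nonneg_left hVbig (by linarith only [hK'1])
        linarith only [hband, hlG', h3]
    have hlb2 : z - P' * V + (P' + N') ^ 2 ≤ l * u := by
      have h4 : l * L0 ≤ l * u := mul_le_mul_of_nonneg_left huL0 h0.le
      rw [hlbdef] at hlbL0
      linarith only [hlbL0, h4]
    have hu0 : 0 ≤ u := by omega
    have huV : u ≤ V := by
      have hlV : l * (P' + N') ≤ l * V := mul_le_mul_of_nonneg_left hVK h0.le
      have hluV : l * u ≤ l * V := by
        rcases le_total lb 0 with h | h
        · rw [max_eq_left h] at hband
          linarith only [hband, hlG', hlV]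
        · rw [max_eq_right h] at hband
          have hlbub : lb ≤ l * V - l * l - 2 * (l * (P' + N')) := by
            rw [hlbdef]; linarith only [hhi]
          linarith only [hband, hlbub, hlG', hll, hlP', hlN']
      exact le_of_mul_le_mul_left hluV h0
    -- apply the tail hypothesis
    obtain ⟨v', hv', hs'⟩ := htail V (z - l * u) hV'
      (hdvdu)
      (by rw [← hP', ← hN']; linarith only [hub])
      (by rw [← hP', ← hN']; linarith only [hlb2])
    refine ⟨Fin.cons u v', ?_, ?_⟩
    · intro i
      refine Fin.cases ?_ ?_ i
      · simpa using ⟨hu0, huV⟩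
      · intro j; simpa using hv' j
    · rw [Fin.sum_univ_succ]
      simp only [Fin.cons_zero, Fin.cons_succ]
      have : ∑ i : Fin r, k i.succ * v' i = z - l * u := hs'
      rw [this]; ring

lemma repOK_neg {r : ℕ} (k : Fin r → ℤ) (h : RepOK k) : RepOK (fun i => -k i) := by
  have hpos : posNorm (fun i => -k i) = negNorm k := rfl
  have hneg : negNorm (fun i => -k i) = posNorm k := by
    simp [posNorm, negNorm, neg_neg]
  have hgcd : gcdT (fun i => -k i) = gcdT k := by
    simp [gcdT, Int.natAbs_neg]
  intro V z hV hdvd hlo hhi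
  rw [hpos, hneg, hgcd] at *
  obtain ⟨v, hv, hs⟩ := h V (-z) (by linarith [hV]; ) (hdvd.neg_right)
    (by linarith) (by linarith)
  exact ⟨v, hv, by
    have : ∑ i, -k i * v i = -∑ i, k i * v i := by
      rw [← Finset.sum_neg_distrib]; exact Finset.sum_congr rfl fun i _ => by ring
    rw [this, hs, neg_neg]⟩

lemma repOK_all : ∀ (r : ℕ) (k : Fin r → ℤ), (∀ i, k i ≠ 0) → RepOK k := by
  intro r
  induction r with
  | zero =>
    intro k _ V z _ _ hlo hhi
    have hP : posNorm k = 0 := by simp [posNorm]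
    have hN : negNorm k = 0 := by simp [negNorm]
    rw [hP, hN] at hlo hhi
    have hz : z = 0 := by simpa using le_antisymm (by linarith) (by linarith)
    exact ⟨fun _ => 0, fun i => i.elim0, by simp [hz]⟩
  | succ r ih =>
    intro k hki
    rcases lt_or_gt_of_ne (hki 0) with h0 | h0
    · have h1 : RepOK (fun i : Fin r => -k i.succ) :=
        repOK_neg _ (ih _ fun i => hki i.succ)
      have h2 : RepOK (fun i => -k i) :=
        step_pos r (fun i => -k i) (fun i => neg_ne_zero.mpr (hki i)) (by simpa using h0) h1
      have h3 := repOK_neg _ h2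
      have h4 : (fun i => -(-k i)) = k := by funext i; ring
      rwa [h4] at h3
    · exact step_pos r k hki h0 (ih _ fun i => hki i.succ)

lemma traj (ρ : ℕ) (hρ : 2 ≤ ρ) {r : ℕ} (k : Fin r → ℤ) (m n c : ℤ) (rel : ℤ → ℤ → Prop)
    (hmP : m + 1 ≤ -posNorm k) (hnN : negNorm k ≤ n - 1)
    (q : ℤ) (hqm : q ∈ Finset.Icc m n) (hq1 : m < q) (hq2 : q < n) :
    ∀ (L : ℕ) (p : ℤ) (hpm : p ∈ Finset.Icc m n), m < p → p < n →
      ∀ v : Fin r → ℕ, (∀ i, v i < ρ ^ L) →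
      ((ρ : ℤ) ^ L * p + ∑ i, k i * (v i : ℤ) = q) →
      ∃ w : List (Letter ρ r),
        (ineqDFA ρ k m n rel c).evalFrom (some ⟨p, hpm⟩) w = some ⟨q, hqm⟩ := by
  intro L
  induction L with
  | zero =>
    intro p hpm hp1 hp2 v hv he
    have hpq : p = q := by
      have hs : ∑ i, k i * (v i : ℤ) = 0 := Finset.sum_eq_zero fun i _ => by
        have h := hv i; simp [pow_zero] at h; simp [h]
      rw [hs] at he; simpa using he
    subst hpq
    exact ⟨[], rfl⟩
  | succ L ih =>
    intro p hpm hp1 hp2 v hv he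
    have hρ0 : 0 < ρ := by omega
    have hρL : 0 < ρ ^ L := Nat.pow_pos hρ0
    have hρZ : (0 : ℤ) < (ρ : ℤ) := by exact_mod_cast hρ0
    have hρLZ : (0 : ℤ) < (ρ : ℤ) ^ L := pow_pos hρZ L
    set d : Fin r → ℕ := fun i => v i / ρ ^ L with hd
    set v' : Fin r → ℕ := fun i => v i % ρ ^ L with hv'def
    have hdlt : ∀ i, d i < ρ := fun i => by
      rw [hd]
      rw [Nat.div_lt_iff_lt_mul hρL]
      calc v i < ρ ^ (L + 1) := hv i
        _ = ρ * ρ ^ L := by ring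
    set b : Letter ρ r := fun i => ⟨d i, hdlt i⟩ with hb
    set p₁ : ℤ := (ρ : ℤ) * p + ∑ i, k i * ((d i : ℕ) : ℤ) with hp₁def
    have hsplit : ∀ i, ((v i : ℕ) : ℤ) = (ρ : ℤ) ^ L * ((d i : ℕ) : ℤ) + ((v' i : ℕ) : ℤ) :=
      fun i => by exact_mod_cast (Nat.div_add_mod (v i) (ρ ^ L)).symm
    have h1 : ∑ i, k i * ((v i : ℕ) : ℤ)
        = (ρ : ℤ) ^ L * (∑ i, k i * ((d i : ℕ) : ℤ)) + ∑ i, k i * ((v' i : ℕ) : ℤ) := by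
      rw [Finset.mul_sum, ← Finset.sum_add_distrib]
      refine Finset.sum_congr rfl fun i _ => ?_
      rw [hsplit i]; ring
    have he' : (ρ : ℤ) ^ L * p₁ + ∑ i, k i * ((v' i : ℕ) : ℤ) = q := by
      calc (ρ : ℤ) ^ L * p₁ + ∑ i, k i * ((v' i : ℕ) : ℤ)
          = (ρ : ℤ) ^ (L + 1) * p
            + ((ρ : ℤ) ^ L * (∑ i, k i * ((d i : ℕ) : ℤ)) + ∑ i, k i * ((v' i : ℕ) : ℤ)) := by
            rw [hp₁def]; ring
        _ = (ρ : ℤ) ^ (L + 1) * p + ∑ i, k i * ((v i : ℕ) : ℤ) := by rw [h1]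
        _ = q := he
    have hW0 : (0 : ℤ) ≤ (ρ : ℤ) ^ L - 1 := by linarith
    have hv'b : ∀ i, 0 ≤ ((v' i : ℕ) : ℤ) ∧ ((v' i : ℕ) : ℤ) ≤ (ρ : ℤ) ^ L - 1 := fun i => by
      constructor
      · positivity
      · have h2 : v' i < ρ ^ L := Nat.mod_lt _ hρL
        have h3 : ((v' i : ℕ) : ℤ) < ((ρ ^ L : ℕ) : ℤ) := by exact_mod_cast h2
        push_cast at h3
        linarith
    have hS1 := sum_mul_le_lower k (fun i => ((v' i : ℕ) : ℤ)) _ hW0 hv'b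
    have hS2 := sum_mul_le_upper k (fun i => ((v' i : ℕ) : ℤ)) _ hW0 hv'b
    have hp₁ub : p₁ ≤ n - 1 := by
      have hc1 : negNorm k * ((ρ : ℤ) ^ L - 1) ≤ (n - 1) * ((ρ : ℤ) ^ L - 1) :=
        mul_le_mul_of_nonneg_right hnN hW0
      have h5 : (ρ : ℤ) ^ L * p₁ ≤ (ρ : ℤ) ^ L * (n - 1) := by
        linarith only [he', hS1, hc1, hq2]
      exact le_of_mul_le_mul_left h5 hρLZ
    have hp₁lb : m + 1 ≤ p₁ := by
      have hc2 : posNorm k * ((ρ : ℤ) ^ L - 1) ≤ (-(m + 1)) * ((ρ : ℤ) ^ L - 1) :=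
        mul_le_mul_of_nonneg_right (by linarith only [hmP]) hW0
      have h5 : (ρ : ℤ) ^ L * (m + 1) ≤ (ρ : ℤ) ^ L * p₁ := by
        linarith only [he', hS2, hc2, hq1]
      exact le_of_mul_le_mul_left h5 hρLZ
    have hp₁m : p₁ ∈ Finset.Icc m n := Finset.mem_Icc.2 ⟨by omega, by omega⟩
    obtain ⟨w', hw'⟩ := ih p₁ hp₁m (by omega) (by omega) v'
      (fun i => Nat.mod_lt _ hρL) he'
    refine ⟨b :: w', ?_⟩
    have hstep : (ineqDFA ρ k m n rel c).step (some ⟨p, hpm⟩) b = some ⟨p₁, hp₁m⟩ := by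
      show clampSt m n (etaStep ρ k p b) = some ⟨p₁, hp₁m⟩
      have h6 : etaStep ρ k p b = p₁ := rfl
      rw [h6, clampSt_eq_some (by omega) (by omega)]
    have h7 : (ineqDFA ρ k m n rel c).evalFrom (some ⟨p, hpm⟩) (b :: w')
        = (ineqDFA ρ k m n rel c).evalFrom
            ((ineqDFA ρ k m n rel c).step (some ⟨p, hpm⟩) b) w' := rfl
    rw [h7, hstep]
    exact hw'

end Aux

end Presburger

namespace Presburger

/-- Lemma `S`.
In `A^{t ⋈ c}_{(m,n)}` with `gcd(t) = 1`, `m` the maximal small and `n` the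
minimal large state, every integer state `q ∈ {m,…,n}` is reachable from every
state `p ∈ S = {s ∈ ℤ : −‖t‖⁺ < s < ‖t‖⁻}`.  (For `x ∈ [m,n]`, `clampSt m n x`
is precisely the integer state `x` of the automaton.) -/
theorem stmt_7 (ρ r : ℕ) (hρ : 2 ≤ ρ) (k : Fin r → ℤ) (hk : Homog k)
    (hgcd : gcdT k = 1)
    (rel : ℤ → ℤ → Prop) (hrel : rel ∈ rel6) (c : ℤ)
    (m n : ℤ) (hm : m = min c (-posNorm k) - 1) (hn : n = max c (negNorm k) + 1)
    (p : ℤ) (hp1 : -posNorm k < p) (hp2 : p < negNorm k)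
    (q : ℤ) (hq : q ∈ Finset.Icc m n) :
    ∃ w : List (Letter ρ r),
      (ineqDFA ρ k m n rel c).evalFrom (clampSt m n p) w = some ⟨q, hq⟩ := by
  classical
  have hρ0 : 0 < ρ := by omega
  have hρZ : (2 : ℤ) ≤ (ρ : ℤ) := by exact_mod_cast hρ
  have hk0 : ∀ i, k i ≠ 0 := by
    rcases hk with h | h
    · exfalso
      subst h
      simp only [posNorm, negNorm, Pi.zero_apply, neg_zero, max_self,
        Finset.sum_const_zero] at hp1 hp2
      linarith
    · exact h
  have hP0 : 0 ≤ posNorm k := posNorm_nonneg k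
  have hN0 : 0 ≤ negNorm k := negNorm_nonneg k
  have hmP : m + 1 ≤ -posNorm k := by
    have := min_le_right c (-posNorm k); omega
  have hnN : negNorm k ≤ n - 1 := by
    have := le_max_right c (negNorm k); omega
  have hPN : -posNorm k ≤ negNorm k - 2 := by omega
  have hmn : m < n := by omega
  have hp1' : m < p := by omega
  have hp2' : p < n := by omega
  have hpmem : p ∈ Finset.Icc m n := Finset.mem_Icc.2 ⟨by omega, by omega⟩
  have hclamp : clampSt m n p = some ⟨p, hpmem⟩ := clampSt_eq_some (by omega) (by omega)
  -- every interior state is reachable from `p`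
  have key : ∀ q' : ℤ, ∀ hq'm : q' ∈ Finset.Icc m n, m < q' → q' < n →
      ∃ w, (ineqDFA ρ k m n rel c).evalFrom (some ⟨p, hpmem⟩) w = some ⟨q', hq'm⟩ := by
    intro q' hq'm hq'1 hq'2
    set K : ℤ := posNorm k + negNorm k with hK
    have hK2 : 2 ≤ K := by omega
    set T : ℕ := (3 * K ^ 2 + |q' - p| + 1).toNat with hT
    have hTval : (T : ℤ) = 3 * K ^ 2 + |q' - p| + 1 := by
      rw [hT]; apply Int.toNat_of_nonneg; positivity
    have hpow : (T : ℤ) + 1 ≤ (ρ : ℤ) ^ T := by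
      calc (T : ℤ) + 1 ≤ 2 ^ T := by exact_mod_cast (Nat.lt_two_pow_self (n := T))
        _ ≤ (ρ : ℤ) ^ T := pow_le_pow_left₀ (by norm_num) (by exact_mod_cast hρ) T
    set V : ℤ := (ρ : ℤ) ^ T - 1 with hVdef
    have habs1 : -|q' - p| ≤ q' - p := neg_abs_le _
    have habs2 : q' - p ≤ |q' - p| := le_abs_self _
    have habs0 : 0 ≤ |q' - p| := abs_nonneg _
    have hsqK : 0 ≤ K ^ 2 := sq_nonneg K
    have hV3 : 3 * K ^ 2 ≤ V := by
      rw [hVdef]; linarith only [hpow, hTval, habs0]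
    have hV0 : (0 : ℤ) ≤ V := by linarith only [hV3, hsqK]
    set z : ℤ := q' - (ρ : ℤ) ^ T * p with hz
    have hdvd : ((gcdT k : ℕ) : ℤ) ∣ z := by rw [hgcd]; exact one_dvd z
    have h6 : 1 * V ≤ (negNorm k - p) * V :=
      mul_le_mul_of_nonneg_right (by omega) hV0
    have h7 : 1 * V ≤ (posNorm k + p) * V :=
      mul_le_mul_of_nonneg_right (by omega) hV0
    have hlo : -negNorm k * V + K ^ 2 ≤ z := by
      rw [hz, hVdef]
      rw [hVdef] at h6
      linarith only [h6, hV3, hTval, hsqK, habs1, hpow]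
    have hhi : z ≤ posNorm k * V - K ^ 2 := by
      rw [hz, hVdef]
      rw [hVdef] at h7
      linarith only [h7, hV3, hTval, hsqK, habs2, hpow]
    obtain ⟨v, hvb, hvs⟩ := repOK_all r k hk0 V z (by rw [← hK]; exact hV3) hdvd
      (by rw [← hK]; exact hlo) (by rw [← hK]; exact hhi)
    set vn : Fin r → ℕ := fun i => (v i).toNat with hvn
    have hvncast : ∀ i, ((vn i : ℕ) : ℤ) = v i := fun i => Int.toNat_of_nonneg (hvb i).1
    have hvnlt : ∀ i, vn i < ρ ^ T := fun i => by
      have h8 : ((vn i : ℕ) : ℤ) < (ρ : ℤ) ^ T := by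
        rw [hvncast i]; linarith only [(hvb i).2, hVdef.le, hVdef.ge]
      have h9 : ((vn i : ℕ) : ℤ) < ((ρ ^ T : ℕ) : ℤ) := by push_cast; exact h8
      exact_mod_cast h9
    have he : (ρ : ℤ) ^ T * p + ∑ i, k i * ((vn i : ℕ) : ℤ) = q' := by
      have hs : ∑ i, k i * ((vn i : ℕ) : ℤ) = z := by
        rw [← hvs]
        exact Finset.sum_congr rfl fun i _ => by rw [hvncast i]
      rw [hs, hz]; ring
    exact traj ρ hρ k m n c rel hmP hnN q' hq'm hq'1 hq'2 T p hpmem hp1' hp2' vn hvnlt he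
  have hqIcc := Finset.mem_Icc.mp hq
  rw [hclamp]
  by_cases hqm' : q = m
  · -- reach `m + 1`, then fall below `m`
    have hm1 : (m + 1 : ℤ) ∈ Finset.Icc m n := Finset.mem_Icc.2 ⟨by omega, by omega⟩
    obtain ⟨w₁, hw₁⟩ := key (m + 1) hm1 (by omega) (by omega)
    set bneg : Letter ρ r := fun i => if k i < 0 then ⟨ρ - 1, by omega⟩ else ⟨0, by omega⟩
      with hbneg
    have htv : tval k (letterInt bneg) = -((ρ : ℤ) - 1) * negNorm k := by
      have hterm : ∀ i, k i * letterInt bneg i = -((ρ : ℤ) - 1) * max (-k i) 0 := fun i => by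
        rw [letterInt]
        by_cases hki' : k i < 0
        · simp only [hbneg, if_pos hki']
          rw [max_eq_left (by linarith : (0 : ℤ) ≤ -k i)]
          have : (((ρ - 1 : ℕ) : ℤ)) = (ρ : ℤ) - 1 := by
            push_cast [Nat.cast_sub (by omega : 1 ≤ ρ)]; ring
          rw [this]; ring
        · simp only [hbneg, if_neg hki']
          rw [max_eq_right (by omega : -k i ≤ 0)]
          simp
      rw [tval, Finset.sum_congr rfl fun i _ => hterm i, ← Finset.mul_sum, negNorm]
    have hmN3 : m + 3 ≤ negNorm k := by omega
    have h8 : ((ρ : ℤ) - 1) * (m + 3) ≤ ((ρ : ℤ) - 1) * negNorm k :=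
      mul_le_mul_of_nonneg_left (by omega) (by linarith)
    have hx : etaStep ρ k (m + 1) bneg ≤ m := by
      have h9 : etaStep ρ k (m + 1) bneg = (ρ : ℤ) * (m + 1) + tval k (letterInt bneg) := rfl
      rw [h9, htv]
      linarith only [h8, hρZ]
    have hqeq : (⟨q, hq⟩ : ↥(Finset.Icc m n)) = ⟨m, Finset.mem_Icc.2 ⟨le_refl m, hmn.le⟩⟩ :=
      Subtype.ext hqm'
    rw [hqeq]
    refine ⟨w₁ ++ [bneg], ?_⟩
    rw [DFA.evalFrom_append_singleton, hw₁]
    show clampSt m n (etaStep ρ k (m + 1) bneg) = _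
    rw [clampSt_eq_low hx hmn.le]
  · by_cases hqn' : q = n
    · -- reach `n - 1`, then jump above `n`
      have hn1 : (n - 1 : ℤ) ∈ Finset.Icc m n := Finset.mem_Icc.2 ⟨by omega, by omega⟩
      obtain ⟨w₁, hw₁⟩ := key (n - 1) hn1 (by omega) (by omega)
      set bpos : Letter ρ r := fun i => if 0 < k i then ⟨ρ - 1, by omega⟩ else ⟨0, by omega⟩
        with hbpos
      have htv : tval k (letterInt bpos) = ((ρ : ℤ) - 1) * posNorm k := by
        have hterm : ∀ i, k i * letterInt bpos i = ((ρ : ℤ) - 1) * max (k i) 0 := fun i => by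
          rw [letterInt]
          by_cases hki' : 0 < k i
          · simp only [hbpos, if_pos hki']
            rw [max_eq_left (by linarith : (0 : ℤ) ≤ k i)]
            have : (((ρ - 1 : ℕ) : ℤ)) = (ρ : ℤ) - 1 := by
              push_cast [Nat.cast_sub (by omega : 1 ≤ ρ)]; ring
            rw [this]; ring
          · simp only [hbpos, if_neg hki']
            rw [max_eq_right (by omega : k i ≤ 0)]
            simp
        rw [tval, Finset.sum_congr rfl fun i _ => hterm i, ← Finset.mul_sum, posNorm]
      have hnP3 : -posNorm k + 3 ≤ n := by omega
      have h8 : ((ρ : ℤ) - 1) * (3 - n) ≤ ((ρ : ℤ) - 1) * posNorm k :=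
        mul_le_mul_of_nonneg_left (by omega) (by linarith)
      have hx : n ≤ etaStep ρ k (n - 1) bpos := by
        have h9 : etaStep ρ k (n - 1) bpos = (ρ : ℤ) * (n - 1) + tval k (letterInt bpos) := rfl
        rw [h9, htv]
        linarith only [h8, hρZ]
      have hqeq : (⟨q, hq⟩ : ↥(Finset.Icc m n)) = ⟨n, Finset.mem_Icc.2 ⟨hmn.le, le_refl n⟩⟩ :=
        Subtype.ext hqn'
      rw [hqeq]
      refine ⟨w₁ ++ [bpos], ?_⟩
      rw [DFA.evalFrom_append_singleton, hw₁]
      show clampSt m n (etaStep ρ k (n - 1) bpos) = _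
      rw [clampSt_eq_high hx hmn.le]
    · -- interior
      exact key q hq (by omega) (by omega)

end Presburger
end

section
/- Let d ≥ 2, let t be a homogeneous term in r variables, and let c ∈ ℤ. The DFA A^{d|t+c} with state set {q_I, 0, 1, …, d−1}, initial state q_I, transition δ(q_I, b) := rem(t[σ(b)], d) and δ(q, b) := rem(ρ·q + t[b], d) for q ∈ {0,…,d−1}, and accepting states {q ∈ {0,…,d−1} : d divides q + c}, represents the set {a ∈ ℤ^r : d divides t[a] + c} and has d + 1 states. In particular, for every nonempty word w ∈ (Σ^r)^+, δ̂(q_I, w) = rem(t[⟨w⟩_ℤ], d). -/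
namespace Presburger

/-- The state `rem(x, d) ∈ {0, …, d-1}` of the divisibility automaton
(`none` only in the degenerate case `d ≤ 0`). -/
noncomputable def mkDivSt (d x : ℤ) : Option ↥(Finset.Ico (0 : ℤ) d) :=
  if h : x % d ∈ Finset.Ico (0 : ℤ) d then some ⟨x % d, h⟩ else none

/-- The DFA `A^{d | t + c}`: states are `q_I = none` together with the
remainders `{0, …, d-1}`; `δ(q_I, b) = rem(t[σ(b)], d)`,
`δ(q, b) = rem(ρ·q + t[b], d)`, and a remainder state `q` is accepting iff
`d ∣ q + c`. -/
noncomputable def divDFA (ρ : ℕ) {r : ℕ} (k : Fin r → ℤ) (d c : ℤ) :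
    DFA (Letter ρ r) (Option ↥(Finset.Ico (0 : ℤ) d)) where
  step q b :=
    match q with
    | none => mkDivSt d (etaInit ρ k b)
    | some z => mkDivSt d (etaStep ρ k z.val b)
  start := none
  accept := {q | ∃ z : ↥(Finset.Ico (0 : ℤ) d), q = some z ∧ d ∣ z.val + c}

lemma natVal_concat (ρ : ℕ) (l : List ℕ) (a : ℕ) :
    natVal ρ (l ++ [a]) = ρ * natVal ρ l + a := by
  simp [natVal, List.foldl_append]

lemma intVal_concat (ρ : ℕ) (b : ℕ) (u : List ℕ) (a : ℕ) :
    intVal ρ ((b :: u) ++ [a]) = ρ * intVal ρ (b :: u) + a := by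
  simp only [List.cons_append, intVal, natVal_concat, List.length_append,
    List.length_cons, List.length_nil]
  push_cast
  ring_nf
  split <;> ring

lemma intVec_concat (ρ r : ℕ) (w : List (Letter ρ r)) (hw : w ≠ []) (b : Letter ρ r) (i : Fin r) :
    intVec ρ r (w ++ [b]) i = ρ * intVec ρ r w i + (b i : ℕ) := by
  obtain ⟨b0, u, rfl⟩ := List.exists_cons_of_ne_nil hw
  simp only [intVec, List.map_append, List.map_cons]
  exact intVal_concat ρ _ _ _

lemma intVec_single (ρ r : ℕ) (b : Letter ρ r) : intVec ρ r [b] = sgnLetter b := by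
  funext i
  simp only [intVec, intVal, natVal, sgnLetter, List.map_cons, List.map_nil,
    List.foldl_nil, List.length_nil, pow_zero, Nat.cast_zero, zero_sub]
  split <;> simp

lemma mkDivSt_eq (d : ℤ) (hd : 0 < d) (x : ℤ) :
    mkDivSt d x = some ⟨x % d, by simp [Finset.mem_Ico, Int.emod_nonneg x hd.ne',
      Int.emod_lt_of_pos x hd]⟩ := by
  rw [mkDivSt, dif_pos]

lemma mkDivSt_congr (d : ℤ) (x y : ℤ) (h : x % d = y % d) : mkDivSt d x = mkDivSt d y := by
  simp [mkDivSt, h]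

lemma divDFA_eval (ρ r : ℕ) (k : Fin r → ℤ) (d c : ℤ) (hd : 0 < d) :
    ∀ w : List (Letter ρ r), w ≠ [] →
      (divDFA ρ k d c).eval w = mkDivSt d (tval k (intVec ρ r w)) := by
  intro w
  induction w using List.reverseRecOn with
  | nil => intro h; exact absurd rfl h
  | append_singleton u b ih =>
    intro _
    rcases eq_or_ne u [] with rfl | hu
    · show (divDFA ρ k d c).step none b = _
      simp [divDFA, etaInit, intVec_single]
    · have : (divDFA ρ k d c).eval (u ++ [b]) =
        (divDFA ρ k d c).step ((divDFA ρ k d c).eval u) b := by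
        exact DFA.evalFrom_append_singleton _ _ _ _
      rw [this, ih hu, mkDivSt_eq d hd]
      show mkDivSt d (etaStep ρ k _ b) = _
      apply mkDivSt_congr
      have hval : tval k (intVec ρ r (u ++ [b])) =
          ρ * tval k (intVec ρ r u) + tval k (letterInt b) := by
        simp only [tval, letterInt]
        rw [Finset.mul_sum, ← Finset.sum_add_distrib]
        refine Finset.sum_congr rfl fun i _ => ?_
        rw [intVec_concat ρ r u hu b i]
        ring
      rw [hval, etaStep]
      have h1 : tval k (intVec ρ r u) % d ≡ tval k (intVec ρ r u) [ZMOD d] :=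
        Int.emod_emod_of_dvd _ dvd_rfl
      exact ((h1.mul_left ρ).add_right (tval k (letterInt b)))

/-- Lemma `bound_automata_divisibility`.
For `d ≥ 2`, the DFA `A^{d | t + c}` represents `{a ∈ ℤ^r : d ∣ t[a] + c}` and
has `d + 1` states; moreover for every nonempty word `w`,
`δ̂(q_I, w) = rem(t[⟨w⟩_ℤ], d)`. -/
theorem stmt_9 (ρ r : ℕ) (hρ : 2 ≤ ρ) (k : Fin r → ℤ) (hk : Homog k)
    (d c : ℤ) (hd : 2 ≤ d) :
    DFARepresents ρ r (divDFA ρ k d c) {a | d ∣ tval k a + c} ∧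
    (Fintype.card (Option ↥(Finset.Ico (0 : ℤ) d)) : ℤ) = d + 1 ∧
    ∀ w : List (Letter ρ r), w ≠ [] →
      (divDFA ρ k d c).eval w = mkDivSt d (tval k (intVec ρ r w)) := by
  have hd0 : (0 : ℤ) < d := by omega
  refine ⟨?_, ?_, divDFA_eval ρ r k d c hd0⟩
  · intro w
    constructor
    · intro hw
      have hne : w ≠ [] := by
        rintro rfl
        obtain ⟨z, hz, _⟩ := hw
        exact nomatch (hz : (none : Option ↥(Finset.Ico (0 : ℤ) d)) = some z)
      refine ⟨hne, ?_⟩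
      have he := divDFA_eval ρ r k d c hd0 w hne
      obtain ⟨z, hz, hdvd⟩ := hw
      rw [show (divDFA ρ k d c).eval w = ((divDFA ρ k d c).eval w) from rfl] at he
      have : (divDFA ρ k d c).eval w = some z := hz
      rw [this, mkDivSt_eq d hd0] at he
      have hzval : z.val = tval k (intVec ρ r w) % d := by
        have := congrArg (Option.map Subtype.val) he
        simp [hz] at this
        omega
      have hq : d ∣ tval k (intVec ρ r w) % d + c := hzval ▸ hdvd
      have hmod : tval k (intVec ρ r w) % d ≡ tval k (intVec ρ r w) [ZMOD d] :=
        Int.emod_emod_of_dvd _ dvd_rfl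
      have h2 := hmod.add_right c
      show d ∣ tval k (intVec ρ r w) + c
      rwa [Int.dvd_iff_emod_eq_zero, ← h2, ← Int.dvd_iff_emod_eq_zero]
    · rintro ⟨hne, hdvd⟩
      have he := divDFA_eval ρ r k d c hd0 w hne
      rw [mkDivSt_eq d hd0] at he
      refine ⟨_, he, ?_⟩
      have hmod : tval k (intVec ρ r w) % d ≡ tval k (intVec ρ r w) [ZMOD d] :=
        Int.emod_emod_of_dvd _ dvd_rfl
      have h2 := (hmod.add_right c)
      rw [Int.dvd_iff_emod_eq_zero, h2, ← Int.dvd_iff_emod_eq_zero]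
      exact hdvd
  · rw [Fintype.card_option, Fintype.card_coe]
    have : (Finset.Ico (0 : ℤ) d).card = d.toNat := by
      rw [Int.card_Ico]; simp
    rw [this]
    omega

end Presburger
end

section
/- Let ρ ≥ 2 and ℓ ≥ 1. For every natural number z with ρ^{ℓ−1} ≤ z ≤ ρ^ℓ − 2, there exist natural numbers x, y, z' with x, y, z' < ρ^ℓ such that x·y = ρ^ℓ·z + z'. -/
/-- Lemma `mult_prefix`.
Let `ρ ≥ 2` and `ℓ ≥ 1`.  For every natural number `z` with
`ρ^{ℓ-1} ≤ z ≤ ρ^ℓ − 2` there are `x, y, z' < ρ^ℓ` with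
`x·y = ρ^ℓ·z + z'`. -/
theorem stmt_16 (ρ ℓ : ℕ) (hρ : 2 ≤ ρ) (hℓ : 1 ≤ ℓ) (z : ℕ)
    (h1 : ρ ^ (ℓ - 1) ≤ z) (h2 : z ≤ ρ ^ ℓ - 2) :
    ∃ x y z' : ℕ, x < ρ ^ ℓ ∧ y < ρ ^ ℓ ∧ z' < ρ ^ ℓ ∧
      x * y = ρ ^ ℓ * z + z' := by
  set N := ρ ^ ℓ with hN
  have hN2 : 2 ≤ N := le_trans hρ (Nat.le_self_pow (by omega) ρ)
  have hz : z + 2 ≤ N := by omega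
  set y := (N * z + z) / (z + 1) with hy
  have hdm := Nat.div_add_mod (N * z + z) (z + 1)
  rw [← hy] at hdm
  have hmod : (N * z + z) % (z + 1) < z + 1 := Nat.mod_lt _ (by omega)
  have hup : (z + 1) * y ≤ N * z + z := by omega
  have hlo : N * z ≤ (z + 1) * y := by omega
  have hyN : y < N := by
    by_contra h
    push_neg at h
    have : (z + 1) * N ≤ (z + 1) * y := Nat.mul_le_mul_left _ h
    nlinarith
  refine ⟨z + 1, y, (z + 1) * y - N * z, by omega, hyN, by omega, by omega⟩
end
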